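/- Let f : ℝⁿ → ℝ be M_f-self-concordant-like. For any x, y in its domain, with r := M_f‖y − x‖₂ and λ := ‖y − x‖_x, we have ((1 − e^{−r})/r)·λ² ≤ ⟨∇f(y) − ∇f(x), y − x⟩ ≤ ((e^{r} − 1)/r)·λ². -/

import Mathlib

open scoped RealInnerProductSpace

/-- A convex `C³` function `f` is `M`-self-concordant-like if along every line
`t ↦ f (x + t • u)` the third derivative is bounded by `M * φ''(t) * ‖u‖`. -/
def SCLike {E : Type*} [NormedAddCommGroup E] [InnerProductSpace ℝ E]
    (M : ℝ) (f : E → ℝ) : Prop :=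
  ContDiff ℝ 3 f ∧ ConvexOn ℝ Set.univ f ∧
    ∀ x u : E, ∀ t : ℝ,
      |deriv^[3] (fun s : ℝ => f (x + s • u)) t| ≤
        M * deriv^[2] (fun s : ℝ => f (x + s • u)) t * ‖u‖

/-- The Hessian quadratic form `⟨∇²f(x) u, u⟩` of `f` at `x`. -/
noncomputable def hessQ {E : Type*} [NormedAddCommGroup E] [InnerProductSpace ℝ E]
    (f : E → ℝ) (x u : E) : ℝ :=
  iteratedFDeriv ℝ 2 f x ![u, u]

/-- The local norm `‖u‖_x := ⟨∇²f(x) u, u⟩^{1/2}`. -/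
noncomputable def locNorm {E : Type*} [NormedAddCommGroup E] [InnerProductSpace ℝ E]
    (f : E → ℝ) (x u : E) : ℝ :=
  Real.sqrt (hessQ f x u)

section aux
variable {E : Type*} [NormedAddCommGroup E] [InnerProductSpace ℝ E]

lemma line_hasDerivAt (x u : E) (s : ℝ) : HasDerivAt (fun s : ℝ => x + s • u) u s := by
  simpa using ((hasDerivAt_id s).smul_const u).const_add x

lemma phi_contDiff {f : E → ℝ} (hf : ContDiff ℝ 3 f) (x u : E) :
    ContDiff ℝ 3 (fun s : ℝ => f (x + s • u)) :=
  hf.comp (contDiff_const.add (contDiff_id.smul contDiff_const))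

lemma phi_deriv {f : E → ℝ} (hf : ContDiff ℝ 3 f) (x u : E) (s : ℝ) :
    HasDerivAt (fun s : ℝ => f (x + s • u)) (fderiv ℝ f (x + s • u) u) s :=
  ((hf.differentiable (by norm_num)) (x + s • u)).hasFDerivAt.comp_hasDerivAt s
    (line_hasDerivAt x u s)

lemma phi_deriv2 {f : E → ℝ} (hf : ContDiff ℝ 3 f) (x u : E) (s : ℝ) :
    HasDerivAt (fun s : ℝ => fderiv ℝ f (x + s • u) u)
      (fderiv ℝ (fderiv ℝ f) (x + s • u) u u) s := by
  have hdf : Differentiable ℝ (fderiv ℝ f) :=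
    (hf.fderiv_right (m := 2) (by norm_num)).differentiable (by norm_num)
  have h1 : HasFDerivAt (fun p => fderiv ℝ f p u)
      ((ContinuousLinearMap.apply ℝ ℝ u).comp (fderiv ℝ (fderiv ℝ f) (x + s • u)))
      (x + s • u) :=
    ((ContinuousLinearMap.apply ℝ ℝ u).hasFDerivAt).comp _ (hdf _).hasFDerivAt
  exact h1.comp_hasDerivAt s (line_hasDerivAt x u s)

end aux

lemma exp_integral_aux (K : ℝ) (hK : K ≠ 0) :
    ∫ t in (0:ℝ)..1, Real.exp (K * t) = (Real.exp K - 1) / K := by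
  rw [intervalIntegral.integral_comp_mul_left Real.exp hK]
  simp [integral_exp]
  field_simp

/-- Bounds on the gradient:
`((1 - e^{-r})/r) λ² ≤ ⟨∇f(y) - ∇f(x), y - x⟩ ≤ ((e^r - 1)/r) λ²`
with `r = M_f ‖y - x‖₂` and `λ² = ⟨∇²f(x)(y-x), y-x⟩`. -/
theorem sclike_gradient_bound {E : Type*} [NormedAddCommGroup E] [InnerProductSpace ℝ E]
    [CompleteSpace E]
    (M : ℝ) (hM : 0 < M) (f : E → ℝ) (hf : SCLike M f) (x y : E) :
    ((1 - Real.exp (-(M * ‖y - x‖))) / (M * ‖y - x‖)) * hessQ f x (y - x) ≤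
        ⟪gradient f y - gradient f x, y - x⟫ ∧
      ⟪gradient f y - gradient f x, y - x⟫ ≤
        ((Real.exp (M * ‖y - x‖) - 1) / (M * ‖y - x‖)) * hessQ f x (y - x) := by
  obtain ⟨hf3, hfc, hineq⟩ := hf
  by_cases h0 : y - x = (0 : E)
  · have hq : hessQ f x (0 : E) = 0 :=
      (iteratedFDeriv ℝ 2 f x).map_coord_zero 0 (by simp)
    rw [h0]
    simp [hq]
  -- main case
  set u : E := y - x with hu
  set K : ℝ := M * ‖u‖ with hK
  have hKpos : 0 < K := mul_pos hM (norm_pos_iff.mpr h0)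
  set φ : ℝ → ℝ := fun s => f (x + s • u) with hφ
  have hd1 : deriv φ = fun s => fderiv ℝ f (x + s • u) u :=
    funext fun s => (phi_deriv hf3 x u s).deriv
  have hg2 : deriv^[2] φ = deriv (deriv φ) := rfl
  have hg3 : deriv^[3] φ = deriv (deriv^[2] φ) := rfl
  set g : ℝ → ℝ := deriv (deriv φ) with hg
  -- regularity
  have hφ3 : ContDiff ℝ 3 φ := phi_contDiff hf3 x u
  have e32 : ((2 : WithTop ℕ∞) + 1) = 3 := by norm_num
  have e21 : ((1 : WithTop ℕ∞) + 1) = 2 := by norm_num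
  have h2' : ContDiff ℝ 2 (deriv φ) := by
    have := (contDiff_succ_iff_deriv (n := 2) (f := φ))
    rw [e32] at this
    exact (this.mp hφ3).2.2
  have h1' : ContDiff ℝ 1 g := by
    have := (contDiff_succ_iff_deriv (n := 1) (f := deriv φ))
    rw [e21] at this
    exact (this.mp h2').2.2
  have hgdiff : Differentiable ℝ g := h1'.differentiable one_ne_zero
  have hgcont : Continuous g := h1'.continuous
  -- value of g at 0
  have hg0 : g 0 = hessQ f x u := by
    have := (phi_deriv2 hf3 x u 0).deriv
    rw [hg, hd1, this, hessQ, iteratedFDeriv_two_apply]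
    simp
  -- Grönwall bound
  have hbound : ∀ t, |deriv g t| ≤ K * g t := by
    intro t
    have := hineq x u t
    rw [hg3, hg2] at this
    calc |deriv g t| ≤ M * g t * ‖u‖ := this
      _ = K * g t := by ring
  have hgnonneg : ∀ t, 0 ≤ g t := fun t => by
    nlinarith [(abs_nonneg (deriv g t)).trans (hbound t), hKpos]
  -- upper Grönwall: g t ≤ exp (K t) * g 0 on [0,1]
  have hup : ∀ t ∈ Set.Icc (0:ℝ) 1, g t ≤ Real.exp (K * t) * g 0 := by
    intro t ht
    have hA : Antitone fun t => Real.exp (-(K * t)) * g t := by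
      apply antitone_of_deriv_nonpos
      · exact (Real.differentiable_exp.comp ((differentiable_id.const_mul K).neg)).mul hgdiff
      · intro s
        have hF : HasDerivAt (fun t => Real.exp (-(K * t)) * g t)
            (Real.exp (-(K * s)) * (-K) * g s + Real.exp (-(K * s)) * deriv g s) s := by
          have h1 : HasDerivAt (fun t : ℝ => Real.exp (-(K * t))) (Real.exp (-(K * s)) * (-K)) s := by
            have : HasDerivAt (fun t : ℝ => -(K * t)) (-K) s := by
              exact (by simpa using (hasDerivAt_id s).const_mul K : HasDerivAt (fun t : ℝ => K * t) K s).neg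
            exact this.exp
          exact h1.mul (hgdiff s).hasDerivAt
        rw [hF.deriv]
        have h2 : deriv g s ≤ K * g s := (le_abs_self _).trans (hbound s)
        nlinarith [Real.exp_pos (-(K * s))]
    have := hA ht.1
    have hE := Real.exp_pos (K * t)
    have hmul := mul_le_mul_of_nonneg_left this hE.le
    rw [show Real.exp (K * t) * (Real.exp (-(K * t)) * g t) = g t by
      rw [← mul_assoc, ← Real.exp_add]; simp] at hmul
    simpa using hmul
  have hdown : ∀ t ∈ Set.Icc (0:ℝ) 1, Real.exp (-(K * t)) * g 0 ≤ g t := by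
    intro t ht
    have hB : Monotone fun t => Real.exp (K * t) * g t := by
      apply monotone_of_deriv_nonneg
      · exact (Real.differentiable_exp.comp (differentiable_id.const_mul K)).mul hgdiff
      · intro s
        have hF : HasDerivAt (fun t => Real.exp (K * t) * g t)
            (Real.exp (K * s) * K * g s + Real.exp (K * s) * deriv g s) s := by
          have h1 : HasDerivAt (fun t : ℝ => Real.exp (K * t)) (Real.exp (K * s) * K) s := by
            have : HasDerivAt (fun t : ℝ => K * t) K s := by
              simpa using (hasDerivAt_id s).const_mul K
            exact this.exp
          exact h1.mul (hgdiff s).hasDerivAt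
        rw [hF.deriv]
        have h2 : -(K * g s) ≤ deriv g s := by
          have := (neg_abs_le (deriv g s))
          have h3 := hbound s
          linarith
        nlinarith [Real.exp_pos (K * s)]
    have := hB ht.1
    have hE := Real.exp_pos (-(K * t))
    have hmul := mul_le_mul_of_nonneg_left this hE.le
    rw [show Real.exp (-(K * t)) * (Real.exp (K * t) * g t) = g t by
      rw [← mul_assoc, ← Real.exp_add]; simp] at hmul
    simpa using hmul
  -- FTC
  have hFTC : ∫ t in (0:ℝ)..1, g t = deriv φ 1 - deriv φ 0 := by
    apply intervalIntegral.integral_deriv_eq_sub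
    · exact fun t _ => (h2'.differentiable (by norm_num)).differentiableAt
    · exact hgcont.intervalIntegrable 0 1
  have hgrad : deriv φ 1 - deriv φ 0 = ⟪gradient f y - gradient f x, y - x⟫ := by
    rw [hd1]
    simp only [one_smul, zero_smul, add_zero]
    rw [show x + u = y by rw [hu]; abel]
    rw [← hu]
    simp [gradient, inner_sub_left, InnerProductSpace.toDual_symm_apply]
  -- integral computations
  have hint1 : ∫ t in (0:ℝ)..1, Real.exp (-(K * t)) * g 0 =
      ((1 - Real.exp (-K)) / K) * g 0 := by
    rw [intervalIntegral.integral_mul_const]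
    congr 1
    have hrw : ∀ t : ℝ, -(K * t) = -K * t := fun t => by ring
    simp_rw [hrw]
    rw [exp_integral_aux (-K) (by linarith)]
    ring
  have hint2 : ∫ t in (0:ℝ)..1, Real.exp (K * t) * g 0 =
      ((Real.exp K - 1) / K) * g 0 := by
    rw [intervalIntegral.integral_mul_const]
    congr 1
    exact exp_integral_aux K (ne_of_gt hKpos)
  -- integrability
  have hi1 : IntervalIntegrable (fun t => Real.exp (-(K * t)) * g 0) MeasureTheory.volume 0 1 :=
    ((Real.continuous_exp.comp ((continuous_const.mul continuous_id : Continuous fun t : ℝ => K * t).neg)).mul continuous_const).intervalIntegrable 0 1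
  have hi2 : IntervalIntegrable (fun t => Real.exp (K * t) * g 0) MeasureTheory.volume 0 1 :=
    ((Real.continuous_exp.comp (continuous_const.mul continuous_id : Continuous fun t : ℝ => K * t)).mul continuous_const).intervalIntegrable 0 1
  have hig : IntervalIntegrable g MeasureTheory.volume 0 1 := hgcont.intervalIntegrable 0 1
  have hlow : ((1 - Real.exp (-K)) / K) * g 0 ≤ ⟪gradient f y - gradient f x, y - x⟫ := by
    rw [← hgrad, ← hFTC, ← hint1]
    exact intervalIntegral.integral_mono_on zero_le_one hi1 hig
      (fun t ht => by simpa [mul_comm] using hdown t ht)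
  have hhigh : ⟪gradient f y - gradient f x, y - x⟫ ≤ ((Real.exp K - 1) / K) * g 0 := by
    rw [← hgrad, ← hFTC, ← hint2]
    exact intervalIntegral.integral_mono_on zero_le_one hig hi2
      (fun t ht => by simpa [mul_comm] using hup t ht)
  rw [hg0] at hlow hhigh
  exact ⟨hlow, hhigh⟩
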